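/- Let N ∈ ℕ, let p₁,…,p_N > 0, and for ρ in D = {ρ ∈ (0,1)^N : Σᵢ ρᵢ < 1} define ρ₀ = 1 - Σᵢ ρᵢ, the diffusion matrix A(ρ) by A_{ii}(ρ) = pᵢ ρᵢ(1-ρᵢ) and A_{ji}(ρ) = -pᵢ ρᵢ ρⱼ for j ≠ i, and the Hessian matrix H(ρ) with entries H_{ij} = δ_{ij}/ρᵢ + 1/ρ₀. Then A(ρ)^T H(ρ) equals the diagonal matrix diag(p₁,…,p_N). -/

import Mathlib

open Matrix

theorem volume_filling_matrix_identity {N : ℕ} (p ρ : Fin N → ℝ)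
    (hp : ∀ i, 0 < p i) (hρ : ∀ i, ρ i ∈ Set.Ioo (0:ℝ) 1)
    (hsum : ∑ i, ρ i < 1)
    (A H : Matrix (Fin N) (Fin N) ℝ)
    (hA : ∀ i j, A j i = if j = i then p i * ρ i * (1 - ρ i) else -(p i * ρ i * ρ j))
    (hH : ∀ i j, H i j = (if i = j then 1 / ρ i else 0) + 1 / (1 - ∑ k, ρ k)) :
    Aᵀ * H = Matrix.diagonal p := by
  have hρ0 : (0:ℝ) < 1 - ∑ k, ρ k := by linarith
  have hρ0' : (1 - ∑ k, ρ k) ≠ 0 := ne_of_gt hρ0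
  ext i j
  have hρi : ρ i ≠ 0 := ne_of_gt (hρ i).1
  have hρj : ρ j ≠ 0 := ne_of_gt (hρ j).1
  rw [Matrix.mul_apply]
  simp only [Matrix.transpose_apply, hA, hH, Matrix.diagonal_apply]
  have hexp : ∀ k, (if k = i then p i * ρ i * (1 - ρ i) else -(p i * ρ i * ρ k)) *
      ((if k = j then 1 / ρ k else 0) + 1 / (1 - ∑ k, ρ k))
      = (if k = j then (if k = i then p i * ρ i * (1 - ρ i) else -(p i * ρ i * ρ k)) / ρ k else 0)
        + (if k = i then p i * ρ i * (1 - ρ i) else -(p i * ρ i * ρ k)) / (1 - ∑ k, ρ k) := by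
    intro k
    by_cases h : k = j <;> simp [h, mul_add, div_eq_mul_inv]
  simp only [hexp, Finset.sum_add_distrib]
  rw [Finset.sum_ite_eq' Finset.univ j]
  have hsum2 : ∑ k, (if k = i then p i * ρ i * (1 - ρ i) else -(p i * ρ i * ρ k)) / (1 - ∑ k, ρ k)
      = (∑ k, (if k = i then p i * ρ i * (1 - ρ i) else -(p i * ρ i * ρ k))) / (1 - ∑ k, ρ k) := by
    rw [Finset.sum_div]
  have hsum3 : (∑ k, (if k = i then p i * ρ i * (1 - ρ i) else -(p i * ρ i * ρ k)))
      = p i * ρ i * (1 - ∑ k, ρ k) := by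
    have : ∀ k, (if k = i then p i * ρ i * (1 - ρ i) else -(p i * ρ i * ρ k))
        = -(p i * ρ i * ρ k) + (if k = i then p i * ρ i else 0) := by
      intro k; by_cases h : k = i <;> simp [h] <;> ring
    simp only [this, Finset.sum_add_distrib, Finset.sum_neg_distrib,
      Finset.sum_ite_eq' Finset.univ i, Finset.mem_univ, if_true, ← Finset.mul_sum]
    ring
  rw [hsum2, hsum3, mul_div_assoc, div_self hρ0', mul_one]
  by_cases h : i = j <;> simp [h, hρj, eq_comm]
  · field_simp; ring
  · field_simp; ring
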